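/- Let g ∈ ℂ be nonzero. In ℂ^{Fin 2 × Fin 2} with standard basis e_{(a,b)}, define ψ^(g) = (conj(g)·e_{(0,1)} − e_{(1,0)})/√(1+|g|²) and let S be the swap operator determined by S e_{(a,b)} = e_{(b,a)}. Then S ψ^(g) = −conj(g) · √((1 + |g^{−1}|²)/(1 + |g|²)) · ψ^(g^{−1}). -/

import Mathlib

noncomputable section

/-- The two-qubit basis vector `e_{(a,b)}`. -/
def eBasis (a b : Fin 2) : Fin 2 × Fin 2 → ℂ := Pi.single (a, b) (1 : ℂ)

/-- The two-qubit vector `ψ^(g) = (conj g · e_{(0,1)} − e_{(1,0)}) / √(1+|g|²)`. -/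
def psiVec (g : ℂ) : Fin 2 × Fin 2 → ℂ :=
  (Real.sqrt (1 + ‖g‖ ^ 2))⁻¹ •
    ((starRingEnd ℂ g) • eBasis 0 1 - eBasis 1 0)

/-- The swap operator on two-qubit vectors, `(S v)(a, b) = v(b, a)`. -/
def swapOp (v : Fin 2 × Fin 2 → ℂ) : Fin 2 × Fin 2 → ℂ := fun p => v (p.2, p.1)

/-- Behaviour of `ψ^(g)` under the swap:
`S ψ^(g) = −conj g · √((1+|g⁻¹|²)/(1+|g|²)) · ψ^(g⁻¹)` (the prefactor has modulus one).
This is the key step in analysing the PVBS-deformed Hamiltonian under spatial reflection. -/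
theorem swap_psiVec (g : ℂ) (hg : g ≠ 0) :
    swapOp (psiVec g) =
      (-(starRingEnd ℂ g) *
          ((Real.sqrt ((1 + ‖g⁻¹‖ ^ 2) / (1 + ‖g‖ ^ 2)) : ℝ) : ℂ)) •
        psiVec g⁻¹ := by
  have hB : (0:ℝ) < 1 + ‖g⁻¹‖ ^ 2 := by positivity
  have hBs : (Real.sqrt (1 + ‖g⁻¹‖ ^ 2)) ≠ 0 := by positivity
  have hBc : ((Real.sqrt (1 + ‖g⁻¹‖ ^ 2) : ℝ) : ℂ) ≠ 0 := by exact_mod_cast hBs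
  have hdiv : Real.sqrt ((1 + ‖g⁻¹‖ ^ 2) / (1 + ‖g‖ ^ 2)) =
      Real.sqrt (1 + ‖g⁻¹‖ ^ 2) / Real.sqrt (1 + ‖g‖ ^ 2) :=
    Real.sqrt_div hB.le _
  have hconj : (starRingEnd ℂ g) * (starRingEnd ℂ g⁻¹) = 1 := by
    rw [← map_mul, mul_inv_cancel₀ hg, map_one]
  simp only [map_inv₀, norm_inv] at hBc hconj
  have hBmul : ((Real.sqrt (1 + ‖g‖⁻¹ ^ 2) : ℝ) : ℂ) *
      ((Real.sqrt (1 + ‖g‖⁻¹ ^ 2) : ℝ) : ℂ)⁻¹ = 1 := mul_inv_cancel₀ hBc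
  have hgc : (starRingEnd ℂ) g ≠ 0 := by simpa using hg
  funext p
  obtain ⟨a, b⟩ := p
  fin_cases a <;> fin_cases b
  · simp only [swapOp, psiVec, eBasis, hdiv, Pi.smul_apply, Pi.sub_apply,
      Pi.single_apply, smul_eq_mul, Complex.real_smul, Complex.ofReal_div,
      Complex.ofReal_inv]
    simp [Prod.ext_iff, Fin.ext_iff]
  · simp only [swapOp, psiVec, eBasis, hdiv, Pi.smul_apply, Pi.sub_apply,
      Pi.single_apply, smul_eq_mul, Complex.real_smul, Complex.ofReal_div,
      Complex.ofReal_inv]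
    simp only [Prod.ext_iff, Fin.ext_iff]
    norm_num
    simp only [inv_pow, one_div] at hBmul ⊢
    linear_combination -((Real.sqrt (1 + ‖g‖ ^ 2) : ℝ) : ℂ)⁻¹ * hconj -
      ((Real.sqrt (1 + ‖g‖ ^ 2) : ℝ) : ℂ)⁻¹ * (starRingEnd ℂ) g *
        ((starRingEnd ℂ) g)⁻¹ * hBmul
  · simp only [swapOp, psiVec, eBasis, hdiv, Pi.smul_apply, Pi.sub_apply,
      Pi.single_apply, smul_eq_mul, Complex.real_smul, Complex.ofReal_div,
      Complex.ofReal_inv]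
    simp only [Prod.ext_iff, Fin.ext_iff]
    norm_num
    simp only [inv_pow, one_div] at hBmul ⊢
    linear_combination -(starRingEnd ℂ) g *
      ((Real.sqrt (1 + ‖g‖ ^ 2) : ℝ) : ℂ)⁻¹ * hBmul
  · simp only [swapOp, psiVec, eBasis, hdiv, Pi.smul_apply, Pi.sub_apply,
      Pi.single_apply, smul_eq_mul, Complex.real_smul, Complex.ofReal_div,
      Complex.ofReal_inv]
    simp [Prod.ext_iff, Fin.ext_iff]
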